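/- The category of Σ'-H'-algebras is equivalent to the category of preordered groups. Explicitly: there is an equivalence of categories between (i) the category whose objects are Σ-H-algebras (sets X with constant 0, unary operations π₀, π₁, ι, −, binary +, satisfying (M) (X,0,+) is a monoid and π₀, π₁, ι preserve 0 and +; (P1) a = π₀(a)+π₁(a) = π₁(a)+π₀(a); (P2) −(π₁(a)) = π₁(ι(a)) = π₀(π₁(a)) = π₁(π₀(a)) = 0; (P3) ι(π₁(a)) = π₀(ι(a)); (G) a+(−a) = (−a)+a = π₁(a); (Inj) ι(a)=ι(b) → π₁(a)=π₁(b)) additionally equipped with a unary operation ▷ satisfying (C1) ι(▷(a)) = π₀(a)+ι(π₁(a))−π₀(a) and (C2) π₀(▷(a)) = 0, with morphisms the maps preserving all operations; and (ii) the category whose objects are pairs (G,P) of a group G and a submonoid P ⊆ G that is closed under conjugation (g·p·g⁻¹ ∈ P for all g ∈ G, p ∈ P), and whose morphisms (G,P) → (H,Q) are group homomorphisms f with f(P) ⊆ Q. -/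
import Mathlib


open CategoryTheory

universe u

/-- A Σ'-H'-algebra: a Σ-H-algebra (a set with a constant `0`, unary operations
`π₀, π₁, ι, -` and a binary operation `+`, subject to the axioms (M), (P1), (P2),
(P3), (G), (Inj)) with one further unary operation `▷` subject to (C1) and (C2). -/
structure SHAlg' : Type (u + 1) where
  /-- the underlying set -/
  X : Type u
  zero : X
  add : X → X → X
  pi0 : X → X
  pi1 : X → X
  iota : X → X
  neg : X → X
  rhd : X → X
  /-- (M): `(X, 0, +)` is a monoid -/
  add_assoc : ∀ a b c, add (add a b) c = add a (add b c)
  zero_add : ∀ a, add zero a = a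
  add_zero : ∀ a, add a zero = a
  /-- (M): `π₀, π₁, ι` are monoid morphisms -/
  pi0_zero : pi0 zero = zero
  pi0_add : ∀ a b, pi0 (add a b) = add (pi0 a) (pi0 b)
  pi1_zero : pi1 zero = zero
  pi1_add : ∀ a b, pi1 (add a b) = add (pi1 a) (pi1 b)
  iota_zero : iota zero = zero
  iota_add : ∀ a b, iota (add a b) = add (iota a) (iota b)
  /-- (P1) -/
  p1a : ∀ a, a = add (pi0 a) (pi1 a)
  p1b : ∀ a, a = add (pi1 a) (pi0 a)
  /-- (P2) -/
  p2a : ∀ a, neg (pi1 a) = zero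
  p2b : ∀ a, pi1 (iota a) = zero
  p2c : ∀ a, pi0 (pi1 a) = zero
  p2d : ∀ a, pi1 (pi0 a) = zero
  /-- (P3) -/
  p3 : ∀ a, iota (pi1 a) = pi0 (iota a)
  /-- (G) -/
  ga : ∀ a, add a (neg a) = pi1 a
  gb : ∀ a, add (neg a) a = pi1 a
  /-- (Inj) -/
  inj : ∀ a b, iota a = iota b → pi1 a = pi1 b
  /-- (C1): `ι(▷ a) = π₀ a + ι(π₁ a) - π₀ a` -/
  c1 : ∀ a, iota (rhd a) = add (add (pi0 a) (iota (pi1 a))) (neg (pi0 a))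
  /-- (C2): `π₀(▷ a) = 0` -/
  c2 : ∀ a, pi0 (rhd a) = zero

/-- Morphisms of Σ'-H'-algebras: maps preserving `0, π₀, π₁, ι, -, +, ▷`. -/
@[ext]
structure SHAlg'Hom (A B : SHAlg'.{u}) where
  toFun : A.X → B.X
  map_zero : toFun A.zero = B.zero
  map_add : ∀ a b, toFun (A.add a b) = B.add (toFun a) (toFun b)
  map_pi0 : ∀ a, toFun (A.pi0 a) = B.pi0 (toFun a)
  map_pi1 : ∀ a, toFun (A.pi1 a) = B.pi1 (toFun a)
  map_iota : ∀ a, toFun (A.iota a) = B.iota (toFun a)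
  map_neg : ∀ a, toFun (A.neg a) = B.neg (toFun a)
  map_rhd : ∀ a, toFun (A.rhd a) = B.rhd (toFun a)

/-- The category of Σ'-H'-algebras. -/
instance : Category SHAlg'.{u} where
  Hom := SHAlg'Hom
  id A := { toFun := id, map_zero := rfl, map_add := fun _ _ => rfl,
            map_pi0 := fun _ => rfl, map_pi1 := fun _ => rfl,
            map_iota := fun _ => rfl, map_neg := fun _ => rfl,
            map_rhd := fun _ => rfl }
  comp f g :=
    { toFun := g.toFun ∘ f.toFun
      map_zero := by simp only [Function.comp_apply, f.map_zero, g.map_zero]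
      map_add := fun a b => by
        simp only [Function.comp_apply, f.map_add, g.map_add]
      map_pi0 := fun a => by simp only [Function.comp_apply, f.map_pi0, g.map_pi0]
      map_pi1 := fun a => by simp only [Function.comp_apply, f.map_pi1, g.map_pi1]
      map_iota := fun a => by simp only [Function.comp_apply, f.map_iota, g.map_iota]
      map_neg := fun a => by simp only [Function.comp_apply, f.map_neg, g.map_neg]
      map_rhd := fun a => by simp only [Function.comp_apply, f.map_rhd, g.map_rhd] }
  id_comp _ := rfl
  comp_id _ := rfl
  assoc _ _ _ := rfl

/-- A preordered group: a group `G` together with a submonoid `P ⊆ G` closed under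
conjugation by every element of `G`. -/
structure PoGrp : Type (u + 1) where
  /-- the underlying group -/
  carrier : Type u
  [grp : Group carrier]
  /-- the positive cone -/
  pos : Submonoid carrier
  /-- the positive cone is closed under conjugation -/
  conj_mem : ∀ g : carrier, ∀ p ∈ pos, g * p * g⁻¹ ∈ pos

attribute [instance] PoGrp.grp

/-- Morphisms of preordered groups: group homomorphisms mapping the positive cone into
the positive cone. -/
@[ext]
structure PoGrpHom (A B : PoGrp.{u}) where
  toHom : A.carrier →* B.carrier
  map_pos : ∀ p ∈ A.pos, toHom p ∈ B.pos

/-- The category of preordered groups. -/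
instance : Category PoGrp.{u} where
  Hom := PoGrpHom
  id A := ⟨MonoidHom.id _, fun _ hp => hp⟩
  comp f g := ⟨g.toHom.comp f.toHom, fun p hp => g.map_pos _ (f.map_pos p hp)⟩
  id_comp _ := rfl
  comp_id _ := rfl
  assoc _ _ _ := rfl

namespace SHAlg'

variable (A : SHAlg'.{u})

theorem pi0_pi0 (a : A.X) : A.pi0 (A.pi0 a) = A.pi0 a := by
  have h := A.p1a (A.pi0 a)
  rw [A.p2d, A.add_zero] at h
  exact h.symm

theorem pi1_pi1 (a : A.X) : A.pi1 (A.pi1 a) = A.pi1 a := by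
  have h := A.p1b (A.pi1 a)
  rw [A.p2c, A.add_zero] at h
  exact h.symm

theorem pi0_eq_self {a : A.X} (h : A.pi1 a = A.zero) : A.pi0 a = a := by
  have h1 := A.p1a a
  rw [h, A.add_zero] at h1
  exact h1.symm

theorem cancel {u : A.X} (hu : A.pi1 u = A.zero) {v w : A.X}
    (h : A.add u v = A.add u w) : v = w := by
  have : A.add (A.neg u) (A.add u v) = A.add (A.neg u) (A.add u w) := by rw [h]
  rwa [← A.add_assoc, ← A.add_assoc, A.gb, hu, A.zero_add, A.zero_add] at this

theorem pi1_neg (a : A.X) : A.pi1 (A.neg a) = A.zero := by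
  have h1 : A.add (A.pi1 a) (A.pi1 (A.neg a)) = A.add (A.pi1 a) A.zero := by
    rw [A.add_zero, ← A.pi1_add, A.ga, A.pi1_pi1]
  have h2 : A.iota (A.pi1 (A.neg a)) = A.iota A.zero :=
    A.cancel (A.p2b (A.pi1 a))
      (by rw [← A.iota_add, ← A.iota_add, h1])
  have h3 := A.inj _ _ h2
  rwa [A.pi1_pi1, A.pi1_zero] at h3

theorem pi0_neg (a : A.X) : A.pi0 (A.neg a) = A.neg (A.pi0 a) := by
  have h1 : A.add (A.pi0 a) (A.pi0 (A.neg a)) = A.zero := by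
    rw [← A.pi0_add, A.ga, A.p2c]
  have h2 : A.add (A.neg (A.pi0 a)) (A.pi0 a) = A.zero := by
    rw [A.gb, A.p2d]
  calc A.pi0 (A.neg a) = A.add A.zero (A.pi0 (A.neg a)) := (A.zero_add _).symm
    _ = A.add (A.add (A.neg (A.pi0 a)) (A.pi0 a)) (A.pi0 (A.neg a)) := by rw [h2]
    _ = A.add (A.neg (A.pi0 a)) (A.add (A.pi0 a) (A.pi0 (A.neg a))) := A.add_assoc _ _ _
    _ = A.neg (A.pi0 a) := by rw [h1, A.add_zero]

theorem pi1_rhd (a : A.X) : A.pi1 (A.rhd a) = A.rhd a := by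
  have h := A.p1a (A.rhd a)
  rw [A.c2, A.zero_add] at h
  exact h.symm

/-- The group part of a Σ'-H'-algebra. -/
def G0 : Type u := {x : A.X // A.pi1 x = A.zero}

instance : Group A.G0 where
  one := ⟨A.zero, A.pi1_zero⟩
  mul a b := ⟨A.add a.1 b.1, by rw [A.pi1_add, a.2, b.2, A.add_zero]⟩
  inv a := ⟨A.neg a.1, A.pi1_neg a.1⟩
  mul_assoc a b c := Subtype.ext (A.add_assoc _ _ _)
  one_mul a := Subtype.ext (A.zero_add _)
  mul_one a := Subtype.ext (A.add_zero _)
  inv_mul_cancel a := Subtype.ext ((A.gb a.1).trans a.2)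

/-- The positive cone. -/
def posOf : Submonoid A.G0 where
  carrier := {g | ∃ a : A.X, A.iota (A.pi1 a) = g.1}
  one_mem' := ⟨A.zero, by rw [A.pi1_zero, A.iota_zero]; rfl⟩
  mul_mem' := by
    rintro x y ⟨a, ha⟩ ⟨b, hb⟩
    exact ⟨A.add (A.pi1 a) (A.pi1 b), by
      rw [A.pi1_add, A.pi1_pi1, A.pi1_pi1, A.iota_add, ha, hb]; rfl⟩

end SHAlg'
/-- The functor from Σ'-H'-algebras to preordered groups. -/
def Fa : SHAlg'.{u} ⥤ PoGrp.{u} where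
  obj A :=
    { carrier := A.G0
      pos := A.posOf
      conj_mem := by
        rintro g p ⟨a, ha⟩
        refine ⟨A.rhd (A.add g.1 (A.pi1 a)), ?_⟩
        have hx0 : A.pi0 (A.add g.1 (A.pi1 a)) = g.1 := by
          rw [A.pi0_add, A.p2c, A.add_zero, A.pi0_eq_self g.2]
        have hx1 : A.pi1 (A.add g.1 (A.pi1 a)) = A.pi1 a := by
          rw [A.pi1_add, g.2, A.zero_add, A.pi1_pi1]
        rw [A.pi1_rhd, A.c1, hx0, hx1, ha]
        rfl }
  map {A B} f :=
    { toHom :=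
        { toFun := fun x => ⟨f.toFun x.1, by rw [← f.map_pi1, x.2, f.map_zero]⟩
          map_one' := Subtype.ext f.map_zero
          map_mul' := fun x y => Subtype.ext (f.map_add x.1 y.1) }
      map_pos := by
        rintro p ⟨a, ha⟩
        exact ⟨f.toFun a, by rw [← f.map_pi1, ← f.map_iota, ha]; rfl⟩ }
  map_id A := rfl
  map_comp f g := rfl

/-- The functor from preordered groups to Σ'-H'-algebras. -/
def Ga : PoGrp.{u} ⥤ SHAlg'.{u} where
  obj G :=
    { X := G.carrier × G.pos
      zero := 1
      add := fun a b => a * b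
      pi0 := fun a => (a.1, 1)
      pi1 := fun a => (1, a.2)
      iota := fun a => ((a.2 : G.carrier), 1)
      neg := fun a => (a.1⁻¹, 1)
      rhd := fun a => (1, ⟨a.1 * (a.2 : G.carrier) * a.1⁻¹, G.conj_mem _ _ a.2.2⟩)
      add_assoc := fun a b c => mul_assoc a b c
      zero_add := one_mul
      add_zero := mul_one
      pi0_zero := rfl
      pi0_add := fun a b => Prod.ext rfl (one_mul (1 : G.pos)).symm
      pi1_zero := rfl
      pi1_add := fun a b => Prod.ext (one_mul (1 : G.carrier)).symm rfl
      iota_zero := rfl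
      iota_add := fun a b => Prod.ext rfl (one_mul (1 : G.pos)).symm
      p1a := fun a => Prod.ext (mul_one a.1).symm (one_mul a.2).symm
      p1b := fun a => Prod.ext (one_mul a.1).symm (mul_one a.2).symm
      p2a := fun a => Prod.ext inv_one rfl
      p2b := fun a => rfl
      p2c := fun a => rfl
      p2d := fun a => rfl
      p3 := fun a => rfl
      ga := fun a => Prod.ext (mul_inv_cancel a.1) (mul_one a.2)
      gb := fun a => Prod.ext (inv_mul_cancel a.1) (one_mul a.2)
      inj := fun a b h =>
        Prod.ext rfl (Subtype.ext (congrArg Prod.fst h))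
      c1 := fun a => Prod.ext rfl (by simp)
      c2 := fun a => rfl }
  map {G H} f :=
    { toFun := fun a => (f.toHom a.1, ⟨f.toHom a.2, f.map_pos _ a.2.2⟩)
      map_zero := Prod.ext f.toHom.map_one (Subtype.ext f.toHom.map_one)
      map_add := fun a b =>
        Prod.ext (f.toHom.map_mul _ _) (Subtype.ext (f.toHom.map_mul _ _))
      map_pi0 := fun a => Prod.ext rfl (Subtype.ext f.toHom.map_one)
      map_pi1 := fun a => Prod.ext f.toHom.map_one rfl
      map_iota := fun a => Prod.ext rfl (Subtype.ext f.toHom.map_one)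
      map_neg := fun a => Prod.ext (map_inv f.toHom a.1) (Subtype.ext f.toHom.map_one)
      map_rhd := fun a => Prod.ext f.toHom.map_one
        (Subtype.ext (by simp [map_inv]))
      }
  map_id G := rfl
  map_comp f g := rfl
/-- A bijective morphism of Σ'-H'-algebras is an isomorphism. -/
noncomputable def isoOfBijective {A B : SHAlg'.{u}} (f : A ⟶ B)
    (hf : Function.Bijective f.toFun) : A ≅ B := by
  let e := Equiv.ofBijective f.toFun hf
  have he : ∀ x, f.toFun (e.symm x) = x := fun x => e.apply_symm_apply x
  refine ⟨f, ⟨e.symm, ?_, ?_, ?_, ?_, ?_, ?_, ?_⟩, ?_, ?_⟩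
  · rw [Equiv.symm_apply_eq]; exact f.map_zero.symm
  · intro a b
    apply hf.1
    rw [he, f.map_add, he, he]
  · intro a; apply hf.1; rw [he, f.map_pi0, he]
  · intro a; apply hf.1; rw [he, f.map_pi1, he]
  · intro a; apply hf.1; rw [he, f.map_iota, he]
  · intro a; apply hf.1; rw [he, f.map_neg, he]
  · intro a; apply hf.1; rw [he, f.map_rhd, he]
  · exact SHAlg'Hom.ext (funext fun a => e.symm_apply_apply a)
  · exact SHAlg'Hom.ext (funext fun a => e.apply_symm_apply a)

/-- The unit morphism. -/
def unitHom (A : SHAlg'.{u}) : A ⟶ (Fa ⋙ Ga).obj A where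
  toFun a := (⟨A.pi0 a, A.p2d a⟩, ⟨⟨A.iota (A.pi1 a), A.p2b _⟩, ⟨a, rfl⟩⟩)
  map_zero := by
    refine Prod.ext (Subtype.ext A.pi0_zero) (Subtype.ext (Subtype.ext ?_))
    show A.iota (A.pi1 A.zero) = A.zero
    rw [A.pi1_zero, A.iota_zero]
  map_add a b := by
    refine Prod.ext (Subtype.ext (A.pi0_add a b)) (Subtype.ext (Subtype.ext ?_))
    show A.iota (A.pi1 (A.add a b)) = A.add (A.iota (A.pi1 a)) (A.iota (A.pi1 b))
    rw [A.pi1_add, A.iota_add]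
  map_pi0 a := by
    refine Prod.ext (Subtype.ext (A.pi0_pi0 a)) (Subtype.ext (Subtype.ext ?_))
    show A.iota (A.pi1 (A.pi0 a)) = A.zero
    rw [A.p2d, A.iota_zero]
  map_pi1 a := by
    refine Prod.ext (Subtype.ext (A.p2c a)) (Subtype.ext (Subtype.ext ?_))
    show A.iota (A.pi1 (A.pi1 a)) = A.iota (A.pi1 a)
    rw [A.pi1_pi1]
  map_iota a := by
    refine Prod.ext (Subtype.ext (A.p3 a).symm) (Subtype.ext (Subtype.ext ?_))
    show A.iota (A.pi1 (A.iota a)) = A.zero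
    rw [A.p2b, A.iota_zero]
  map_neg a := by
    refine Prod.ext (Subtype.ext (A.pi0_neg a)) (Subtype.ext (Subtype.ext ?_))
    show A.iota (A.pi1 (A.neg a)) = A.zero
    rw [A.pi1_neg, A.iota_zero]
  map_rhd a := by
    refine Prod.ext (Subtype.ext (A.c2 a)) (Subtype.ext (Subtype.ext ?_))
    show A.iota (A.pi1 (A.rhd a)) =
      A.add (A.add (A.pi0 a) (A.iota (A.pi1 a))) (A.neg (A.pi0 a))
    rw [A.pi1_rhd, A.c1]

theorem unitHom_bijective (A : SHAlg'.{u}) : Function.Bijective (unitHom A).toFun := by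
  constructor
  · intro a b h
    have h0 : A.pi0 a = A.pi0 b := congrArg Subtype.val (congrArg Prod.fst h)
    have h1 : A.iota (A.pi1 a) = A.iota (A.pi1 b) :=
      congrArg Subtype.val (congrArg Subtype.val (congrArg Prod.snd h))
    have h1' := A.inj _ _ h1
    rw [A.pi1_pi1, A.pi1_pi1] at h1'
    rw [A.p1a a, A.p1a b, h0, h1']
  · rintro ⟨g, p, a, ha⟩
    refine ⟨A.add g.1 (A.pi1 a), Prod.ext (Subtype.ext ?_) (Subtype.ext (Subtype.ext ?_))⟩
    · show A.pi0 (A.add g.1 (A.pi1 a)) = g.1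
      rw [A.pi0_add, A.p2c, A.add_zero, A.pi0_eq_self g.2]
    · show A.iota (A.pi1 (A.add g.1 (A.pi1 a))) = p.1
      rw [A.pi1_add, g.2, A.zero_add, A.pi1_pi1, ha]
/-- The counit isomorphism components. -/
def counitHom (G : PoGrp.{u}) : (Ga ⋙ Fa).obj G ⟶ G where
  toHom :=
    { toFun := fun x => x.val.1
      map_one' := rfl
      map_mul' := fun x y => rfl }
  map_pos := by
    rintro p ⟨a, ha⟩
    have h := congrArg Prod.fst ha
    show p.val.1 ∈ G.pos
    rw [← h]
    exact a.2.2

def counitInv (G : PoGrp.{u}) : G ⟶ (Ga ⋙ Fa).obj G where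
  toHom :=
    { toFun := fun g => ⟨(g, 1), rfl⟩
      map_one' := rfl
      map_mul' := fun _ _ => Subtype.ext (Prod.ext rfl (one_mul (1 : G.pos)).symm) }
  map_pos := fun g hg => ⟨(1, ⟨g, hg⟩), rfl⟩

def counitIsoApp (G : PoGrp.{u}) : (Ga ⋙ Fa).obj G ≅ G where
  hom := counitHom G
  inv := counitInv G
  hom_inv_id := by
    apply PoGrpHom.ext
    apply MonoidHom.ext
    intro x
    exact Subtype.ext (Prod.ext rfl (congrArg Prod.snd x.2).symm)
  inv_hom_id := rfl

/-- The equivalence. -/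
noncomputable def theEquiv : SHAlg'.{u} ≌ PoGrp.{u} :=
  CategoryTheory.Equivalence.mk Fa Ga
    (NatIso.ofComponents (fun A => isoOfBijective (unitHom A) (unitHom_bijective A))
      (by
        intro A B f
        apply SHAlg'Hom.ext
        funext a
        show (unitHom B).toFun (f.toFun a) = ((Fa ⋙ Ga).map f).toFun ((unitHom A).toFun a)
        refine Prod.ext (Subtype.ext (f.map_pi0 a).symm)
          (Subtype.ext (Subtype.ext ?_))
        show B.iota (B.pi1 (f.toFun a)) = f.toFun (A.iota (A.pi1 a))
        rw [← f.map_pi1, ← f.map_iota]))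
    (NatIso.ofComponents counitIsoApp (by intro G H f; rfl))

theorem shAlg'_equiv_poGrp : Nonempty (SHAlg'.{u} ≌ PoGrp.{u}) := ⟨theEquiv⟩
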